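/- There exists n₀ such that for all n ≥ n₀, m(n+1) ≥ (1 + 1/20)·m(n). -/

import Mathlib

namespace ExtremalInducedCycles

/-- The vertex set `s` induces a cycle (of length at least 3) in `G`:
the induced subgraph is connected and 2-regular. -/
def IsInducedCycle {V : Type*} (G : SimpleGraph V) (s : Set V) : Prop :=
  s.Finite ∧ 3 ≤ s.ncard ∧ (G.induce s).Connected ∧
    ∀ v ∈ s, {w | w ∈ s ∧ G.Adj v w}.ncard = 2

/-- `f(G)`: the number of induced cycles in `G`. -/
noncomputable def numInducedCycles {V : Type*} (G : SimpleGraph V) : ℕ :=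
  {s : Set V | IsInducedCycle G s}.ncard

/-- `m(n)`: the maximum number of induced cycles in an `n`-vertex graph. -/
noncomputable def maxInducedCycles (n : ℕ) : ℕ :=
  sSup {k : ℕ | ∃ G : SimpleGraph (Fin n), numInducedCycles G = k}

/-- Transfer lemma: if `ψ` is injective on `s` and preserves adjacency between `s`
and its image, then induced-cycle-ness transfers to the image. -/
lemma IsInducedCycle.image {V W : Type*} {G : SimpleGraph V} {G' : SimpleGraph W}
    {ψ : V → W} {s : Set V} (hinj : Set.InjOn ψ s)
    (hadj : ∀ a ∈ s, ∀ b ∈ s, (G.Adj a b ↔ G'.Adj (ψ a) (ψ b)))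
    (h : IsInducedCycle G s) : IsInducedCycle G' (ψ '' s) := by
  obtain ⟨hfin, hcard, hconn, hdeg⟩ := h
  refine ⟨hfin.image ψ, ?_, ?_, ?_⟩
  · rwa [Set.ncard_image_of_injOn hinj]
  · -- connectivity via the equivalence s ≃ ψ '' s
    have hiso : G.induce s ≃g G'.induce (ψ '' s) := by
      refine ⟨Equiv.Set.imageOfInjOn ψ s hinj, ?_⟩
      rintro ⟨a, ha⟩ ⟨b, hb⟩
      exact (hadj a ha b hb).symm
    exact hiso.connected_iff.mp hconn
  · rintro w ⟨a, ha, rfl⟩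
    have : {w' | w' ∈ ψ '' s ∧ G'.Adj (ψ a) w'} = ψ '' {w' | w' ∈ s ∧ G.Adj a w'} := by
      ext w'
      constructor
      · rintro ⟨⟨b, hb, rfl⟩, hadj'⟩
        exact ⟨b, ⟨hb, (hadj a ha b hb).mpr hadj'⟩, rfl⟩
      · rintro ⟨b, ⟨hb, hab⟩, rfl⟩
        exact ⟨⟨b, hb, rfl⟩, (hadj a ha b hb).mp hab⟩
    rw [this, Set.ncard_image_of_injOn (hinj.mono (fun x hx => hx.1))]
    exact hdeg a ha

/-- Counting transfer: a globally injective adjacency-preserving map gives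
`numInducedCycles G ≤ numInducedCycles G'`. -/
lemma numInducedCycles_le_of_inj {V W : Type*} [Finite W] {G : SimpleGraph V}
    {G' : SimpleGraph W} {ψ : V → W} (hψ : Function.Injective ψ)
    (hadj : ∀ a b, G.Adj a b ↔ G'.Adj (ψ a) (ψ b)) :
    numInducedCycles G ≤ numInducedCycles G' := by
  apply Set.ncard_le_ncard_of_injOn (fun s => ψ '' s)
  · intro s hs
    exact hs.image (hψ.injOn) (fun a _ b _ => hadj a b)
  · intro s _ t _ hst
    have := congrArg (ψ ⁻¹' ·) hst
    simpa [Set.preimage_image_eq _ hψ] using this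

lemma bddAbove_values (n : ℕ) :
    BddAbove {k : ℕ | ∃ G : SimpleGraph (Fin n), numInducedCycles G = k} := by
  refine ⟨Nat.card (Set (Fin n)), ?_⟩
  rintro k ⟨G, rfl⟩
  calc numInducedCycles G ≤ (Set.univ : Set (Set (Fin n))).ncard :=
        Set.ncard_le_ncard (Set.subset_univ _) (Set.toFinite _)
    _ = Nat.card (Set (Fin n)) := Set.ncard_univ _

lemma le_maxInducedCycles {n : ℕ} (G : SimpleGraph (Fin n)) :
    numInducedCycles G ≤ maxInducedCycles n :=
  le_csSup (bddAbove_values n) ⟨G, rfl⟩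

lemma exists_extremal (n : ℕ) :
    ∃ G : SimpleGraph (Fin n), numInducedCycles G = maxInducedCycles n := by
  have h : maxInducedCycles n ∈ {k : ℕ | ∃ G : SimpleGraph (Fin n), numInducedCycles G = k} :=
    Nat.sSup_mem ⟨numInducedCycles (⊥ : SimpleGraph (Fin n)), (⊥ : SimpleGraph (Fin n)), rfl⟩
      (bddAbove_values n)
  exact h

/-- The blow-up of the cycle `C_k` by independent sets of size 3. -/
def blowup (k : ℕ) [NeZero k] : SimpleGraph (Fin k × Fin 3) where
  Adj x y := x.1 ≠ y.1 ∧ (x.1 = y.1 + 1 ∨ y.1 = x.1 + 1)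
  symm := ⟨by rintro x y ⟨h1, h2⟩; exact ⟨h1.symm, h2.symm⟩⟩
  loopless := ⟨by rintro x ⟨h1, _⟩; exact h1 rfl⟩

lemma blowup_adj {k : ℕ} [NeZero k] (x y : Fin k × Fin 3) :
    (blowup k).Adj x y ↔ x.1 ≠ y.1 ∧ (x.1 = y.1 + 1 ∨ y.1 = x.1 + 1) := Iff.rfl

open Fin.NatCast in
lemma blowup_cycle (k' : ℕ) (c : Fin (k' + 3) → Fin 3) :
    IsInducedCycle (blowup (k' + 3)) {p : Fin (k' + 3) × Fin 3 | p.2 = c p.1} := by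
  have hone : (1 : Fin (k' + 3)).val = 1 := rfl
  have h10 : (1 : Fin (k' + 3)) ≠ 0 := by
    intro h; rw [Fin.ext_iff] at h; simp [hone] at h
  have h20 : (1 + 1 : Fin (k' + 3)) ≠ 0 := by
    intro h; rw [Fin.ext_iff] at h
    have h2 : ((1 + 1 : Fin (k' + 3))).val = 2 := by
      rw [Fin.val_add, hone]
      exact Nat.mod_eq_of_lt (by omega)
    simp [h2] at h
  have hne1 : ∀ i : Fin (k' + 3), i + 1 ≠ i := by
    intro i h
    exact h10 (by rwa [add_eq_left] at h)
  have hne2 : ∀ i : Fin (k' + 3), i - 1 ≠ i := by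
    intro i h
    exact h10 (by rwa [sub_eq_self] at h)
  have hne3 : ∀ i : Fin (k' + 3), i + 1 ≠ i - 1 := by
    intro i h
    apply h20
    have h2 : (i + 1) - (i - 1) = 1 + 1 := by abel
    rw [h] at h2
    simpa using h2.symm
  have hmem : ∀ i : Fin (k' + 3),
      ((i, c i) : Fin (k' + 3) × Fin 3) ∈ {p : Fin (k' + 3) × Fin 3 | p.2 = c p.1} :=
    fun i => rfl
  have hset : ∀ i : Fin (k' + 3),
      {w | w ∈ {p : Fin (k' + 3) × Fin 3 | p.2 = c p.1} ∧ (blowup (k' + 3)).Adj (i, c i) w}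
        = {((i + 1 : Fin (k' + 3)), c (i + 1)), ((i - 1 : Fin (k' + 3)), c (i - 1))} := by
    intro i
    ext ⟨j, b⟩
    simp only [Set.mem_setOf_eq, Set.mem_insert_iff, Set.mem_singleton_iff, blowup_adj,
      Prod.mk.injEq]
    constructor
    · rintro ⟨hb, _, h | h⟩
      · right
        have hj : j = i - 1 := by rw [eq_sub_iff_add_eq]; exact h.symm
        exact ⟨hj, by rw [hb, hj]⟩
      · left
        exact ⟨h, by rw [hb, h]⟩
    · rintro (⟨rfl, rfl⟩ | ⟨rfl, rfl⟩)
      · exact ⟨rfl, fun h => hne1 i h.symm, Or.inr rfl⟩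
      · refine ⟨rfl, fun h => hne2 i h.symm, Or.inl ?_⟩
        rw [sub_add_cancel]
  refine ⟨Set.toFinite _, ?_, ?_, ?_⟩
  · -- cardinality
    have heq : {p : Fin (k' + 3) × Fin 3 | p.2 = c p.1}
        = Set.range (fun i : Fin (k' + 3) => (i, c i)) := by
      ext ⟨j, b⟩
      simp only [Set.mem_setOf_eq, Set.mem_range, Prod.mk.injEq]
      constructor
      · rintro rfl; exact ⟨j, rfl, rfl⟩
      · rintro ⟨i, rfl, rfl⟩; rfl
    have hinj : Function.Injective (fun i : Fin (k' + 3) => ((i, c i) : Fin (k' + 3) × Fin 3)) :=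
      fun a b h => congrArg Prod.fst h
    rw [heq, ← Set.image_univ, Set.ncard_image_of_injective _ hinj, Set.ncard_univ]
    simp
  · -- connectivity
    have hreach : ∀ m : ℕ,
        ((blowup (k' + 3)).induce {p : Fin (k' + 3) × Fin 3 | p.2 = c p.1}).Reachable
          ⟨((m : Fin (k' + 3)), c (m : Fin (k' + 3))), hmem _⟩
          ⟨((0 : Fin (k' + 3)), c (0 : Fin (k' + 3))), hmem _⟩ := by
      intro m
      induction m with
      | zero =>
        have h0 : ((0 : ℕ) : Fin (k' + 3)) = (0 : Fin (k' + 3)) := Nat.cast_zero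
        exact SimpleGraph.Reachable.refl _
      | succ m ih =>
        refine SimpleGraph.Reachable.trans ?_ ih
        apply SimpleGraph.Adj.reachable
        show (blowup (k' + 3)).Adj (((m + 1 : ℕ) : Fin (k' + 3)), _) (((m : ℕ) : Fin (k' + 3)), _)
        rw [blowup_adj]
        have hcast : ((m + 1 : ℕ) : Fin (k' + 3)) = ((m : ℕ) : Fin (k' + 3)) + 1 := by
          push_cast; ring
        rw [hcast]
        exact ⟨hne1 _, Or.inl rfl⟩
    haveI : Nonempty {p : Fin (k' + 3) × Fin 3 | p.2 = c p.1} := ⟨⟨(0, c 0), hmem 0⟩⟩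
    refine SimpleGraph.Connected.mk ?_
    · rintro ⟨⟨i, b⟩, hb⟩ ⟨⟨j, b'⟩, hb'⟩
      simp only [Set.mem_setOf_eq] at hb hb'
      subst hb hb'
      have hx : (⟨(i, c i), hmem i⟩ :
            {p : Fin (k' + 3) × Fin 3 | p.2 = c p.1})
          = ⟨((i.val : Fin (k' + 3)), c (i.val : Fin (k' + 3))), hmem _⟩ := by
        congr 1 <;> rw [Fin.cast_val_eq_self]
      have hy : (⟨(j, c j), hmem j⟩ :
            {p : Fin (k' + 3) × Fin 3 | p.2 = c p.1})
          = ⟨((j.val : Fin (k' + 3)), c (j.val : Fin (k' + 3))), hmem _⟩ := by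
        congr 1 <;> rw [Fin.cast_val_eq_self]
      rw [hx, hy]
      exact (hreach i.val).trans (hreach j.val).symm
  · -- degrees
    rintro ⟨i, b⟩ hb
    simp only [Set.mem_setOf_eq] at hb
    subst hb
    rw [hset i]
    apply Set.ncard_pair
    intro h
    exact hne3 i (congrArg Prod.fst h)

lemma blowup_count (k' : ℕ) : 3 ^ (k' + 3) ≤ numInducedCycles (blowup (k' + 3)) := by
  classical
  set F : (Fin (k' + 3) → Fin 3) → Set (Fin (k' + 3) × Fin 3) :=
    fun c => {p | p.2 = c p.1} with hF
  have hinj : Function.Injective F := by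
    intro c c' h
    funext i
    have : ((i, c i) : Fin (k' + 3) × Fin 3) ∈ F c' := h ▸ (rfl : _ ∈ F c)
    exact this
  have hsub : Set.range F ⊆ {s | IsInducedCycle (blowup (k' + 3)) s} := by
    rintro _ ⟨c, rfl⟩
    exact blowup_cycle k' c
  calc 3 ^ (k' + 3) = Nat.card (Fin (k' + 3) → Fin 3) := by
        simp [Nat.card_eq_fintype_card]
    _ = (Set.range F).ncard := by
        rw [← Set.image_univ, Set.ncard_image_of_injective _ hinj, Set.ncard_univ]
    _ ≤ numInducedCycles (blowup (k' + 3)) :=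
        Set.ncard_le_ncard hsub (Set.toFinite _)

lemma pow_le_max {n : ℕ} (h : 9 ≤ n) : 3 ^ (n / 3) ≤ maxInducedCycles n := by
  obtain ⟨k', hk'⟩ : ∃ k', n / 3 = k' + 3 := ⟨n / 3 - 3, by omega⟩
  have hcard : Fintype.card (Fin (k' + 3) × Fin 3) ≤ Fintype.card (Fin n) := by
    simp only [Fintype.card_prod, Fintype.card_fin]
    have := Nat.div_mul_le_self n 3
    omega
  obtain ⟨e⟩ := Function.Embedding.nonempty_of_card_le hcard
  have h1 : numInducedCycles (blowup (k' + 3)) ≤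
      numInducedCycles ((blowup (k' + 3)).map e) := by
    refine numInducedCycles_le_of_inj e.injective ?_
    intro a b
    exact (SimpleGraph.map_adj_apply).symm
  rw [hk']
  exact le_trans (blowup_count k') (h1.trans (le_maxInducedCycles _))

/-- Clone a vertex `v`: add a new vertex with the same neighbourhood as `v`,
not adjacent to `v`. -/
def clone {V : Type*} (H : SimpleGraph V) (v : V) : SimpleGraph (V ⊕ Unit) where
  Adj x y :=
    match x, y with
    | .inl a, .inl b => H.Adj a b
    | .inl a, .inr _ => H.Adj a v
    | .inr _, .inl b => H.Adj b v
    | .inr _, .inr _ => False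
  symm := ⟨by
    rintro (a | a) (b | b) h
    · exact h.symm
    · exact h
    · exact h
    · exact h⟩
  loopless := ⟨by
    rintro (a | a) h
    · exact H.loopless.irrefl a h
    · exact h⟩

lemma clone_count {V : Type*} [Fintype V] (H : SimpleGraph V) (v : V) :
    numInducedCycles H + {s : Set V | IsInducedCycle H s ∧ v ∈ s}.ncard ≤
      numInducedCycles (clone H v) := by
  classical
  set ψ : V → V ⊕ Unit := fun x => if x = v then Sum.inr () else Sum.inl x with hψ
  have hψinj : Function.Injective ψ := by
    intro a b h
    by_cases ha : a = v <;> by_cases hb : b = v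
    · rw [ha, hb]
    · exfalso; simp [hψ, ha, hb] at h
    · exfalso; simp [hψ, ha, hb] at h
    · simpa [hψ, ha, hb] using h
  -- type-1 images
  have himg1 : ∀ s : Set V, IsInducedCycle H s →
      IsInducedCycle (clone H v) (Sum.inl '' s) := by
    intro s hs
    exact hs.image (Sum.inl_injective.injOn) (fun a _ b _ => Iff.rfl)
  -- type-2 images
  have himg2 : ∀ s : Set V, IsInducedCycle H s → v ∈ s →
      IsInducedCycle (clone H v) (ψ '' s) := by
    intro s hs hv
    refine hs.image (hψinj.injOn) ?_
    intro a _ b _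
    by_cases ha : a = v <;> by_cases hb : b = v
    · simp only [hψ]; rw [if_pos ha, if_pos hb, ha, hb]
      exact iff_of_false (H.loopless.irrefl v) (fun h => h)
    · simp only [hψ]; rw [if_pos ha, if_neg hb, ha]
      exact H.adj_comm v b
    · simp only [hψ]; rw [if_neg ha, if_pos hb, hb]
      exact Iff.rfl
    · simp only [hψ, if_neg ha, if_neg hb]
      exact Iff.rfl
  set A : Set (Set (V ⊕ Unit)) := (Set.image Sum.inl) '' {s | IsInducedCycle H s} with hA
  set B : Set (Set (V ⊕ Unit)) :=
    (Set.image ψ) '' {s | IsInducedCycle H s ∧ v ∈ s} with hB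
  have hAcard : A.ncard = numInducedCycles H :=
    Set.ncard_image_of_injective _ (Set.image_injective.mpr Sum.inl_injective)
  have hBcard : B.ncard = {s : Set V | IsInducedCycle H s ∧ v ∈ s}.ncard :=
    Set.ncard_image_of_injective _ (Set.image_injective.mpr hψinj)
  have hdisj : Disjoint A B := by
    rw [Set.disjoint_left]
    rintro _ ⟨s, _, rfl⟩ ⟨t, ⟨_, hvt⟩, heq⟩
    have h1 : Sum.inr () ∈ ψ '' t := ⟨v, hvt, by simp [hψ]⟩
    rw [heq] at h1
    obtain ⟨a, _, ha⟩ := h1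
    exact Sum.inl_ne_inr ha
  have hsub : A ∪ B ⊆ {s | IsInducedCycle (clone H v) s} := by
    rintro _ (⟨s, hs, rfl⟩ | ⟨s, ⟨hs, hvs⟩, rfl⟩)
    · exact himg1 s hs
    · exact himg2 s hs hvs
  calc numInducedCycles H + {s : Set V | IsInducedCycle H s ∧ v ∈ s}.ncard
      = A.ncard + B.ncard := by rw [hAcard, hBcard]
    _ = (A ∪ B).ncard := (Set.ncard_union_eq hdisj (Set.toFinite _) (Set.toFinite _)).symm
    _ ≤ numInducedCycles (clone H v) := Set.ncard_le_ncard hsub (Set.toFinite _)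

/-- Transfer the clone construction to `Fin (n+1)`. -/
lemma clone_le_max {n : ℕ} (H : SimpleGraph (Fin n)) (v : Fin n) :
    numInducedCycles H + {s : Set (Fin n) | IsInducedCycle H s ∧ v ∈ s}.ncard ≤
      maxInducedCycles (n + 1) := by
  classical
  set φ : (Fin n ⊕ Unit) → Fin (n + 1) :=
    Sum.elim Fin.castSucc (fun _ => Fin.last n) with hφ
  have hφinj : Function.Injective φ := by
    rintro (a | a) (b | b) h <;> simp only [hφ, Sum.elim_inl, Sum.elim_inr] at h
    · exact congrArg Sum.inl (Fin.castSucc_injective n h)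
    · exact absurd h (Fin.castSucc_lt_last a).ne
    · exact absurd h.symm (Fin.castSucc_lt_last b).ne
    · rfl
  have h1 : numInducedCycles (clone H v) ≤
      numInducedCycles ((clone H v).map (⟨φ, hφinj⟩ : Fin n ⊕ Unit ↪ Fin (n + 1))) := by
    refine numInducedCycles_le_of_inj hφinj ?_
    intro a b
    exact (SimpleGraph.map_adj_apply).symm
  exact le_trans (clone_count H v) (h1.trans (le_maxInducedCycles _))

lemma succ_pow_le (t : ℕ) : (t + 1) ^ t ≤ 3 * t ^ t := by
  rcases Nat.eq_zero_or_pos t with rfl | ht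
  · norm_num
  have htR : (0 : ℝ) < t := by exact_mod_cast ht
  have h1 : ((t : ℝ) + 1) ^ t ≤ 3 * (t : ℝ) ^ t := by
    have he : (1 + 1 / (t : ℝ)) ≤ Real.exp (1 / t) := by
      have := Real.add_one_le_exp (1 / (t : ℝ))
      linarith
    have hpow : (1 + 1 / (t : ℝ)) ^ t ≤ Real.exp (1 / t) ^ t := by
      apply pow_le_pow_left₀ (by positivity) he
    have hexp : Real.exp (1 / (t : ℝ)) ^ t = Real.exp 1 := by
      rw [← Real.exp_nat_mul]
      congr 1
      field_simp
    have he3 : Real.exp 1 ≤ 3 := by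
      have := Real.exp_one_lt_d9
      linarith
    have hsplit : ((t : ℝ) + 1) = (t : ℝ) * (1 + 1 / t) := by field_simp
    calc ((t : ℝ) + 1) ^ t = (t : ℝ) ^ t * (1 + 1 / (t : ℝ)) ^ t := by
          rw [hsplit, mul_pow]
      _ ≤ (t : ℝ) ^ t * Real.exp 1 := by
          rw [← hexp]
          exact mul_le_mul_of_nonneg_left hpow (by positivity)
      _ ≤ 3 * (t : ℝ) ^ t := by nlinarith [pow_pos htR t]
  exact_mod_cast h1

lemma pow_self_le (t : ℕ) : t ^ t ≤ 3 ^ t * t.factorial := by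
  induction t with
  | zero => norm_num
  | succ t ih =>
    calc (t + 1) ^ (t + 1) = (t + 1) ^ t * (t + 1) := by ring
      _ ≤ (3 * t ^ t) * (t + 1) := Nat.mul_le_mul_right _ (succ_pow_le t)
      _ ≤ (3 * (3 ^ t * t.factorial)) * (t + 1) := by
          exact Nat.mul_le_mul_right _ (Nat.mul_le_mul_left _ ih)
      _ = 3 ^ (t + 1) * (t + 1).factorial := by
          rw [Nat.factorial_succ]; ring

lemma choose_le_sixty {n t : ℕ} (ht : 1 ≤ t) (hn : n ≤ 20 * t) :
    n.choose t ≤ 60 ^ t := by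
  have h1 : n.choose t * t.factorial ≤ n ^ t := by
    rw [mul_comm, ← Nat.descFactorial_eq_factorial_mul_choose]
    exact n.descFactorial_le_pow t
  have h2 : n ^ t ≤ (20 * t) ^ t := Nat.pow_le_pow_left hn t
  have h3 : n.choose t * t ^ t ≤ 60 ^ t * t ^ t := by
    calc n.choose t * t ^ t ≤ n.choose t * (3 ^ t * t.factorial) :=
          Nat.mul_le_mul_left _ (pow_self_le t)
      _ = 3 ^ t * (n.choose t * t.factorial) := by ring
      _ ≤ 3 ^ t * (20 * t) ^ t := Nat.mul_le_mul_left _ (h1.trans h2)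
      _ = 60 ^ t * t ^ t := by rw [mul_pow, ← mul_assoc, ← Nat.mul_pow]
  have hpos : 0 < t ^ t := Nat.pow_pos (by omega)
  exact Nat.le_of_mul_le_mul_right h3 hpos

lemma choose_mono_half {n k t : ℕ} (hk : k ≤ t) (ht : t ≤ n / 2) :
    n.choose k ≤ n.choose t := by
  induction t with
  | zero =>
    have : k = 0 := by omega
    simp [this]
  | succ t ih =>
    rcases Nat.eq_or_lt_of_le hk with rfl | hlt
    · exact le_refl _
    · have h1 : n.choose k ≤ n.choose t := ih (by omega) (by omega)
      exact h1.trans (Nat.choose_le_succ_of_lt_half_left (by omega))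

lemma sixty_pow_lt (t : ℕ) (ht : 3 ≤ t) : 80 * t * 60 ^ t ≤ 3 ^ (6 * t) := by
  induction t with
  | zero => omega
  | succ t ih =>
    rcases Nat.lt_or_ge t 3 with h3 | h3
    · interval_cases t
      · omega
      · omega
      · norm_num
    · have ih' := ih h3
      have : 3 ^ (6 * (t + 1)) = 729 * 3 ^ (6 * t) := by
        rw [show 6 * (t + 1) = 6 * t + 6 by ring, pow_add]; ring
      rw [this]
      calc 80 * (t + 1) * 60 ^ (t + 1) = 60 * (80 * t * 60 ^ t) + 60 * (80 * 60 ^ t) := by ring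
        _ ≤ 60 * (80 * t * 60 ^ t) + 60 * (80 * t * 60 ^ t) := by
            have h80 : 80 * 60 ^ t ≤ 80 * t * 60 ^ t := by
              have : 80 * 1 ≤ 80 * t := by omega
              calc 80 * 60 ^ t = 80 * 1 * 60 ^ t := by ring
                _ ≤ 80 * t * 60 ^ t := Nat.mul_le_mul_right _ (by omega)
            omega
        _ = 120 * (80 * t * 60 ^ t) := by ring
        _ ≤ 729 * (80 * t * 60 ^ t) := by omega
        _ ≤ 729 * 3 ^ (6 * t) := Nat.mul_le_mul_left _ ih'

open Finset

lemma exists_good_vertex {n : ℕ} (hn : 760 ≤ n) (H : SimpleGraph (Fin n))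
    (hbig : 3 ^ (n / 3) ≤ numInducedCycles H) :
    ∃ v : Fin n, numInducedCycles H ≤
      20 * {s : Set (Fin n) | IsInducedCycle H s ∧ v ∈ s}.ncard := by
  classical
  set t : ℕ := n / 19 with htdef
  -- basic numeric facts about t
  have ht40 : 40 ≤ t := by omega
  have htn : n ≤ 19 * t + 18 := by omega
  have ht2 : t ≤ n / 2 := by omega
  have ht20 : n ≤ 20 * t := by omega
  have ht6 : 6 * t ≤ n / 3 := by omega
  -- the finset of induced cycles
  set C : Finset (Set (Fin n)) :=
    (Set.toFinite {s : Set (Fin n) | IsInducedCycle H s}).toFinset with hC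
  have hmemC : ∀ s : Set (Fin n), s ∈ C ↔ IsInducedCycle H s := by
    intro s; rw [hC, Set.Finite.mem_toFinset]; rfl
  have hm : numInducedCycles H = C.card := by
    rw [numInducedCycles, Set.ncard_eq_toFinset_card']
    congr 1
    ext s
    rw [hmemC, Set.mem_toFinset]; rfl
  set m := C.card with hmdef
  -- degrees
  set d : Fin n → ℕ := fun v => (C.filter (fun s => v ∈ s)).card with hd
  have hdv : ∀ v : Fin n, {s : Set (Fin n) | IsInducedCycle H s ∧ v ∈ s}.ncard = d v := by
    intro v
    rw [Set.ncard_eq_toFinset_card']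
    congr 1
    ext s
    simp only [Set.mem_toFinset, Set.mem_setOf_eq, hd, Finset.mem_filter, hmemC]
  -- double counting
  have hdouble : ∑ s ∈ C, s.ncard = ∑ v : Fin n, d v := by
    have h1 : ∀ s : Set (Fin n), s.ncard = ∑ v : Fin n, if v ∈ s then 1 else 0 := by
      intro s
      rw [Set.ncard_eq_toFinset_card', ← Finset.card_filter]
      congr 1
      ext v
      simp
    have h2 : ∀ v : Fin n, d v = ∑ s ∈ C, if v ∈ s then 1 else 0 := by
      intro v
      exact Finset.card_filter _ _
    calc ∑ s ∈ C, s.ncard = ∑ s ∈ C, ∑ v : Fin n, if v ∈ s then 1 else 0 := by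
          exact Finset.sum_congr rfl (fun s _ => h1 s)
      _ = ∑ v : Fin n, ∑ s ∈ C, if v ∈ s then 1 else 0 := Finset.sum_comm
      _ = ∑ v : Fin n, d v := Finset.sum_congr rfl (fun v _ => (h2 v).symm)
  -- short and long cycles
  set E := (C.filter (fun s => s.ncard < t)).card with hE
  set L := (C.filter (fun s => ¬ s.ncard < t)).card with hL
  have hEL : E + L = m := Finset.card_filter_add_card_filter_not _
  -- the number of short cycles is small
  have hshort : E ≤ t * 60 ^ t := by
    have hmap : ∀ s ∈ C.filter (fun s => s.ncard < t), s.toFinset ∈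
        (Finset.range t).biUnion (fun k => Finset.univ.powersetCard k) := by
      intro s hs
      rw [Finset.mem_filter] at hs
      rw [Finset.mem_biUnion]
      exact ⟨s.ncard, Finset.mem_range.mpr hs.2,
        by rw [Finset.mem_powersetCard]
           exact ⟨Finset.subset_univ _, by rw [Set.ncard_eq_toFinset_card']⟩⟩
    have hinj : Set.InjOn (fun s : Set (Fin n) => s.toFinset)
        ↑(C.filter (fun s => s.ncard < t)) := by
      intro s _ s' _ h
      simpa [Set.toFinset_inj] using h
    have h1 : E ≤ ((Finset.range t).biUnion (fun k => Finset.univ.powersetCard k)).card :=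
      Finset.card_le_card_of_injOn _ hmap hinj
    have h2 : ((Finset.range t).biUnion (fun k => Finset.univ.powersetCard k)).card ≤
        ∑ k ∈ Finset.range t, (Finset.univ.powersetCard k : Finset (Finset (Fin n))).card :=
      Finset.card_biUnion_le
    have h3 : ∀ k ∈ Finset.range t,
        (Finset.univ.powersetCard k : Finset (Finset (Fin n))).card ≤ 60 ^ t := by
      intro k hk
      rw [Finset.card_powersetCard, Finset.card_univ, Fintype.card_fin]
      exact (choose_mono_half (Finset.mem_range.mp hk).le ht2).trans
        (choose_le_sixty (by omega) ht20)
    calc E ≤ _ := h1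
      _ ≤ _ := h2
      _ ≤ ∑ _k ∈ Finset.range t, 60 ^ t := Finset.sum_le_sum h3
      _ = t * 60 ^ t := by rw [Finset.sum_const, Finset.card_range, smul_eq_mul]
  -- m is big compared to E
  have hmE : 80 * E ≤ m := by
    calc 80 * E ≤ 80 * (t * 60 ^ t) := by omega
      _ = 80 * t * 60 ^ t := by ring
      _ ≤ 3 ^ (6 * t) := sixty_pow_lt t (by omega)
      _ ≤ 3 ^ (n / 3) := Nat.pow_le_pow_right (by omega) ht6
      _ ≤ m := by rw [← hm]; exact hbig
  -- lower bound on the total length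
  have hlong : t * L ≤ ∑ s ∈ C, s.ncard := by
    calc t * L = ∑ _s ∈ C.filter (fun s => ¬ s.ncard < t), t := by
          rw [Finset.sum_const, smul_eq_mul, mul_comm]
      _ ≤ ∑ s ∈ C.filter (fun s => ¬ s.ncard < t), s.ncard := by
          refine Finset.sum_le_sum ?_
          intro s hs
          rw [Finset.mem_filter] at hs
          omega
      _ ≤ ∑ s ∈ C, s.ncard := Finset.sum_le_sum_of_subset (Finset.filter_subset _ _)
  -- pigeonhole
  have hpig : ∃ v : Fin n, t * L ≤ n * d v := by
    have hne : (Finset.univ : Finset (Fin n)).Nonempty := by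
      rw [Finset.univ_nonempty_iff]
      exact ⟨⟨0, by omega⟩⟩
    have hsum : ∑ _v : Fin n, t * L ≤ ∑ v : Fin n, n * d v := by
      rw [Finset.sum_const, Finset.card_univ, Fintype.card_fin, smul_eq_mul,
        ← Finset.mul_sum, ← hdouble]
      exact Nat.mul_le_mul_left n hlong
    obtain ⟨v, _, hv⟩ := Finset.exists_le_of_sum_le hne hsum
    exact ⟨v, hv⟩
  obtain ⟨v, hv⟩ := hpig
  refine ⟨v, ?_⟩
  rw [hm, hdv v]
  -- final arithmetic: m ≤ 20 * d v
  -- from: t*L ≤ n*(d v), E + L = m, 80E ≤ m, n ≤ 19t+18, 40 ≤ t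
  have h79 : 79 * E ≤ L := by omega
  have h4n : 4 * n ≤ 79 * t := by omega
  -- n * m = n*E + n*L ≤ 20 * t * L ≤ 20 * n * d v  ⇒ m ≤ 20 d v
  have hkey : n * m ≤ 20 * (t * L) := by
    have ha : 79 * (n * E) ≤ n * L :=
      le_trans (by rw [← Nat.mul_assoc, Nat.mul_comm 79 n, Nat.mul_assoc];
                   exact Nat.mul_le_mul_left n h79) (le_refl _)
    have hb : 4 * (n * L) ≤ 79 * (t * L) := by
      calc 4 * (n * L) = (4 * n) * L := by ring
        _ ≤ (79 * t) * L := Nat.mul_le_mul_right L h4n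
        _ = 79 * (t * L) := by ring
    -- 79 * (n*m) = 79*n*E + 79*n*L ≤ n*L + 79*(n*L) = 80*(n*L) = 20*(4*(n*L)) ≤ 20*79*(t*L)
    have hc : 79 * (n * m) ≤ 79 * (20 * (t * L)) := by
      calc 79 * (n * m) = 79 * (n * E) + 79 * (n * L) := by rw [← hEL]; ring
        _ ≤ n * L + 79 * (n * L) := by omega
        _ = 20 * (4 * (n * L)) := by ring
        _ ≤ 20 * (79 * (t * L)) := Nat.mul_le_mul_left 20 hb
        _ = 79 * (20 * (t * L)) := by ring
    exact Nat.le_of_mul_le_mul_left hc (by omega)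
  have : n * m ≤ n * (20 * d v) := by
    calc n * m ≤ 20 * (t * L) := hkey
      _ ≤ 20 * (n * d v) := Nat.mul_le_mul_left 20 hv
      _ = n * (20 * d v) := by ring
  exact Nat.le_of_mul_le_mul_left this (by omega)

/-- Lemma: `m(n+1) ≥ (1 + 1/20)·m(n)` for all sufficiently large `n`. -/
theorem maxInducedCycles_succ_ge :
    ∃ n₀ : ℕ, ∀ n : ℕ, n₀ ≤ n →
      (1 + 1 / 20 : ℝ) * (maxInducedCycles n : ℝ) ≤ (maxInducedCycles (n + 1) : ℝ) := by
  refine ⟨760, fun n hn => ?_⟩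
  obtain ⟨H, hH⟩ := exists_extremal n
  have hbig : 3 ^ (n / 3) ≤ numInducedCycles H := by
    rw [hH]; exact pow_le_max (by omega)
  obtain ⟨v, hv⟩ := exists_good_vertex hn H hbig
  have hclone := clone_le_max H v
  set dv := {s : Set (Fin n) | IsInducedCycle H s ∧ v ∈ s}.ncard with hdv
  have h1 : (numInducedCycles H : ℝ) + (dv : ℝ) ≤ (maxInducedCycles (n + 1) : ℝ) := by
    exact_mod_cast hclone
  have h2 : (numInducedCycles H : ℝ) ≤ 20 * (dv : ℝ) := by exact_mod_cast hv
  have h3 : (maxInducedCycles n : ℝ) = (numInducedCycles H : ℝ) := by exact_mod_cast hH.symm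
  rw [h3]
  nlinarith [h1, h2]

end ExtremalInducedCycles
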